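/- Let r > 1 and δ ≥ 0. Define T on symmetric real 3×3 matrices by T(D) = ((|D| − δ)⁺/|D|) (1 + |D|²)^{(r−2)/2} D for D ≠ O and T(O) = O. Then T is monotone: (T(D₁) − T(D₂)) : (D₁ − D₂) ≥ 0 for all symmetric real 3×3 matrices D₁, D₂. -/

import Mathlib

/-- Frobenius norm of a real 3×3 matrix: `|A|² = tr(A²)` for symmetric `A`. -/
noncomputable def frobNorm (A : Matrix (Fin 3) (Fin 3) ℝ) : ℝ :=
  Real.sqrt (∑ i, ∑ j, (A i j) ^ 2)

/-- Entrywise product `A : B = Σᵢⱼ Aᵢⱼ Bᵢⱼ`. -/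
def mdot (A B : Matrix (Fin 3) (Fin 3) ℝ) : ℝ := ∑ i, ∑ j, A i j * B i j

/-- Monotonicity of the scalar function `g(d) = (d-δ)⁺ (1+d²)^{(r-2)/2}` -/
lemma gmono (r δ : ℝ) (hr : 1 < r) (hδ : 0 ≤ δ) {a b : ℝ} (hb : 0 ≤ b) (hab : b ≤ a) :
    max (b - δ) 0 * (1 + b ^ 2) ^ ((r - 2) / 2)
      ≤ max (a - δ) 0 * (1 + a ^ 2) ^ ((r - 2) / 2) := by
  rcases le_or_gt b δ with h | h
  · rw [max_eq_right (by linarith), zero_mul]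
    exact mul_nonneg (le_max_right _ _) (Real.rpow_nonneg (by positivity) _)
  · have ha : δ < a := lt_of_lt_of_le h hab
    rw [max_eq_left (by linarith), max_eq_left (by linarith)]
    have hb1 : (0:ℝ) < 1 + b ^ 2 := by positivity
    have ha1 : (0:ℝ) < 1 + a ^ 2 := by positivity
    rcases le_or_gt 2 r with h2 | h2
    · have he : (0:ℝ) ≤ (r - 2) / 2 := by linarith
      have := Real.rpow_le_rpow hb1.le (by nlinarith : 1 + b ^ 2 ≤ 1 + a ^ 2) he
      apply mul_le_mul (by linarith) this (by positivity) (by linarith)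
    · -- 1 < r < 2.  Set q = (2-r)/2 ∈ (0, 1/2).
      set q : ℝ := (2 - r) / 2 with hq
      have hq0 : 0 < q := by rw [hq]; linarith
      have hq12 : 2 * q < 1 := by rw [hq]; linarith
      have hrw : ∀ d : ℝ, 0 < 1 + d ^ 2 →
          (1 + d ^ 2) ^ ((r - 2) / 2) = ((1 + d ^ 2) ^ q)⁻¹ := by
        intro d hd
        rw [← Real.rpow_neg hd.le]
        rw [hq]; ring_nf
      rw [hrw a ha1, hrw b hb1]
      rw [← div_eq_mul_inv, ← div_eq_mul_inv, div_le_div_iff₀ (by positivity) (by positivity)]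
      -- goal: (b - δ) * (1 + a ^ 2) ^ q ≤ (a - δ) * (1 + b ^ 2) ^ q
      -- key: ((b-δ)^2 * (1+a^2))^q ≤ ((a-δ)^2 * (1+b^2))^q and factor (·-δ)^{1-2q}
      have hbd : (0:ℝ) < b - δ := by linarith
      have had : (0:ℝ) < a - δ := by linarith
      have key : (b - δ) ^ 2 * (1 + a ^ 2) ≤ (a - δ) ^ 2 * (1 + b ^ 2) := by
        have k1 : (b - δ) * a ≤ (a - δ) * b := by nlinarith [mul_nonneg hδ (sub_nonneg.2 hab)]
        have k2 : ((b - δ) * a) ^ 2 ≤ ((a - δ) * b) ^ 2 := by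
          apply pow_le_pow_left₀ (mul_nonneg hbd.le (by linarith)) k1
        nlinarith [k2, sq_nonneg (a - δ), sq_nonneg (b - δ)]
      have keyq : ((b - δ) ^ 2 * (1 + a ^ 2)) ^ q ≤ ((a - δ) ^ 2 * (1 + b ^ 2)) ^ q :=
        Real.rpow_le_rpow (by positivity) key hq0.le
      rw [Real.mul_rpow (by positivity) (by positivity),
          Real.mul_rpow (by positivity) (by positivity)] at keyq
      have h2q : ∀ x : ℝ, 0 < x → (x ^ 2 : ℝ) ^ q = x ^ (2 * q) := by
        intro x hx
        rw [← Real.rpow_natCast x 2, ← Real.rpow_mul hx.le]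
        norm_num
      rw [h2q _ hbd, h2q _ had] at keyq
      have hfac : (b - δ) ^ (1 - 2*q) ≤ (a - δ) ^ (1 - 2*q) :=
        Real.rpow_le_rpow hbd.le (by linarith) (by linarith)
      calc (b - δ) * (1 + a ^ 2) ^ q
          = (b - δ) ^ (1 - 2*q) * ((b - δ) ^ (2*q) * (1 + a ^ 2) ^ q) := by
            rw [← mul_assoc, ← Real.rpow_add hbd]; norm_num
        _ ≤ (a - δ) ^ (1 - 2*q) * ((a - δ) ^ (2*q) * (1 + b ^ 2) ^ q) := by
            apply mul_le_mul hfac keyq (by positivity) (by positivity)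
        _ = (a - δ) * (1 + b ^ 2) ^ q := by
            rw [← mul_assoc, ← Real.rpow_add had]; norm_num

theorem statement13 (r δ : ℝ) (hr : 1 < r) (hδ : 0 ≤ δ)
    (T : Matrix (Fin 3) (Fin 3) ℝ → Matrix (Fin 3) (Fin 3) ℝ)
    (hT : ∀ D, T D = ((max (frobNorm D - δ) 0 / frobNorm D)
      * (1 + frobNorm D ^ 2) ^ ((r - 2) / 2)) • D)
    (D₁ D₂ : Matrix (Fin 3) (Fin 3) ℝ) (h₁ : D₁.IsSymm) (h₂ : D₂.IsSymm) :
    0 ≤ mdot (T D₁ - T D₂) (D₁ - D₂) := by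
  set a := frobNorm D₁ with hadef
  set b := frobNorm D₂ with hbdef
  have ha0 : 0 ≤ a := Real.sqrt_nonneg _
  have hb0 : 0 ≤ b := Real.sqrt_nonneg _
  have ha2 : a ^ 2 = ∑ i, ∑ j, (D₁ i j) ^ 2 := Real.sq_sqrt (by positivity)
  have hb2 : b ^ 2 = ∑ i, ∑ j, (D₂ i j) ^ 2 := Real.sq_sqrt (by positivity)
  set c := max (a - δ) 0 / a * (1 + a ^ 2) ^ ((r - 2) / 2) with hcdef
  set e := max (b - δ) 0 / b * (1 + b ^ 2) ^ ((r - 2) / 2) with hedef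
  have hc0 : 0 ≤ c := by
    have : (0:ℝ) ≤ max (a - δ) 0 := le_max_right _ _
    positivity
  have he0 : 0 ≤ e := by
    have : (0:ℝ) ≤ max (b - δ) 0 := le_max_right _ _
    positivity
  have hca : c * a = max (a - δ) 0 * (1 + a ^ 2) ^ ((r - 2) / 2) := by
    rcases eq_or_lt_of_le ha0 with h | h
    · rw [← h, mul_zero, show max ((0:ℝ) - δ) 0 = 0 from max_eq_right (by linarith), zero_mul]
    · rw [hcdef]; field_simp
  have heb : e * b = max (b - δ) 0 * (1 + b ^ 2) ^ ((r - 2) / 2) := by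
    rcases eq_or_lt_of_le hb0 with h | h
    · rw [← h, mul_zero, show max ((0:ℝ) - δ) 0 = 0 from max_eq_right (by linarith), zero_mul]
    · rw [hedef]; field_simp
  -- Cauchy–Schwarz
  have hCS : mdot D₁ D₂ ≤ a * b := by
    have h1 : mdot D₁ D₂ = ∑ p : Fin 3 × Fin 3, D₁ p.1 p.2 * D₂ p.1 p.2 := by
      rw [mdot, ← Finset.sum_product']; rfl
    have h2 := Real.sum_mul_le_sqrt_mul_sqrt Finset.univ
      (fun p : Fin 3 × Fin 3 => D₁ p.1 p.2) (fun p : Fin 3 × Fin 3 => D₂ p.1 p.2)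
    rw [h1]
    refine h2.trans_eq ?_
    congr 1
    · rw [hadef, frobNorm, ← Finset.sum_product']; rfl
    · rw [hbdef, frobNorm, ← Finset.sum_product']; rfl
  -- expansion
  have hexp : mdot (T D₁ - T D₂) (D₁ - D₂)
      = c * (∑ i, ∑ j, (D₁ i j) ^ 2) + e * (∑ i, ∑ j, (D₂ i j) ^ 2)
        - (c + e) * mdot D₁ D₂ := by
    rw [hT, hT, ← hadef, ← hbdef, ← hcdef, ← hedef]
    simp only [mdot, Matrix.sub_apply, Matrix.smul_apply, smul_eq_mul,
      Finset.mul_sum, ← Finset.sum_sub_distrib, ← Finset.sum_add_distrib]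
    apply Finset.sum_congr rfl
    intro i _
    apply Finset.sum_congr rfl
    intro j _
    ring
  rw [hexp, ← ha2, ← hb2]
  -- (c*a - e*b) * (a - b) ≥ 0 since c*a = g(a), e*b = g(b), g monotone
  have hmain : 0 ≤ (c * a - e * b) * (a - b) := by
    rcases le_total b a with h | h
    · have := gmono r δ hr hδ hb0 h
      rw [← hca, ← heb] at this
      apply mul_nonneg (by linarith) (by linarith)
    · have := gmono r δ hr hδ ha0 h
      rw [← hca, ← heb] at this
      have h3 : 0 ≤ (e * b - c * a) * (b - a) := mul_nonneg (by linarith) (by linarith)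
      nlinarith [h3]
  nlinarith [mul_le_mul_of_nonneg_left hCS (add_nonneg hc0 he0)]
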